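/- Let n be a positive integer, θ ∈ (0,1), and a ∈ ℝ^n with a_1 < a_2 < ⋯ < a_n. Set i* = n − ⌊θn⌋. Then the maximizer of π ↦ ∑_{i=1}^n π_i a_i over P_θ is unique, and it is given by π*_i = 1/(θn) for i > i*, π*_{i*} = 1 − ⌊θn⌋/(θn), and π*_i = 0 for i < i*; consequently max_{π∈P_θ} ∑_i π_i a_i = (1/(θn)) ∑_{i=i*+1}^n a_i + (1 − ⌊θn⌋/(θn)) a_{i*}. -/

import Mathlib

open scoped BigOperators

noncomputable section

/-- For strictly sorted `a`, the maximizer of `π ↦ ∑ i, π i * a i` over the polytope `P_θ`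
is unique and given explicitly: with `k = ⌊θn⌋` and (1-indexed) `i* = n - k`, it puts weight
`1/(θn)` above `i*`, weight `1 - k/(θn)` at `i*`, and `0` below; the maximal value is
`(1/(θn)) ∑_{i > i*} a_i + (1 - k/(θn)) a_{i*}`. (Indices are 0-indexed in Lean: the
1-indexed entry `i` is `a ⟨i-1, _⟩`.) -/
theorem superquantile_unique_maximizer
    (n : ℕ) (hn : 0 < n) (θ : ℝ) (hθ : θ ∈ Set.Ioo (0:ℝ) 1)
    (a : Fin n → ℝ) (ha : StrictMono a) :
    ∀ k : ℕ, k = ⌊θ * (n : ℝ)⌋₊ →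
    ∀ πstar : Fin n → ℝ,
      πstar = (fun i : Fin n => if n - k ≤ (i : ℕ) then 1 / (θ * n)
               else if (i : ℕ) + 1 = n - k then 1 - k / (θ * n) else 0) →
      ((∀ i, 0 ≤ πstar i) ∧ (∑ i, πstar i = 1) ∧ (∀ i, πstar i ≤ 1 / (θ * n))) ∧
      (∀ π : Fin n → ℝ, (∀ i, 0 ≤ π i) → (∑ i, π i = 1) → (∀ i, π i ≤ 1 / (θ * n)) →
        ∑ i, π i * a i ≤ ∑ i, πstar i * a i) ∧
      (∀ π : Fin n → ℝ, (∀ i, 0 ≤ π i) → (∑ i, π i = 1) → (∀ i, π i ≤ 1 / (θ * n)) →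
        ∑ i, π i * a i = ∑ i, πstar i * a i → π = πstar) ∧
      (∑ i, πstar i * a i
        = (1 / (θ * n)) * ∑ i ∈ Finset.univ.filter (fun i : Fin n => n - k ≤ (i : ℕ)), a i
          + (1 - k / (θ * n)) * a ⟨n - k - 1, by omega⟩) := by
  intro k hk πstar hπ
  obtain ⟨hθ0, hθ1⟩ := hθ
  have hn' : (0:ℝ) < n := by exact_mod_cast hn
  have hθn : 0 < θ * n := mul_pos hθ0 hn'
  have hkle : (k:ℝ) ≤ θ * n := by rw [hk]; exact Nat.floor_le hθn.le
  have hklt : θ * n < (k:ℝ) + 1 := by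
    rw [hk]; push_cast; exact Nat.lt_floor_add_one _
  have hθnn : θ * n < (n:ℝ) := by nlinarith
  have hkn : k < n := by rw [hk]; exact (Nat.floor_lt hθn.le).mpr hθnn
  set m : Fin n := ⟨n - k - 1, by omega⟩ with hm
  have hmv : (m:ℕ) = n - k - 1 := rfl
  have hval : ∀ i : Fin n, πstar i =
      if n - k ≤ (i:ℕ) then 1/(θ*n) else
        if (i:ℕ) + 1 = n - k then 1 - (k:ℝ)/(θ*n) else 0 := fun i => by rw [hπ]
  have hval_lt : ∀ i : Fin n, i < m → πstar i = 0 := by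
    intro i h
    rw [Fin.lt_def, hmv] at h
    rw [hval, if_neg (by omega), if_neg (by omega)]
  have hval_gt : ∀ i : Fin n, m < i → πstar i = 1/(θ*n) := by
    intro i h
    rw [Fin.lt_def, hmv] at h
    rw [hval, if_pos (by omega)]
  have hval_m : πstar m = 1 - (k:ℝ)/(θ*n) := by
    rw [hval, if_neg (by rw [hmv]; omega), if_pos (by rw [hmv]; omega)]
  -- the key summation lemma
  have hsum : ∀ g : Fin n → ℝ, ∑ i, πstar i * g i
      = (1/(θ*n)) * (∑ i ∈ Finset.univ.filter (fun i : Fin n => n - k ≤ (i:ℕ)), g i)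
        + (1 - (k:ℝ)/(θ*n)) * g m := by
    intro g
    have step1 : ∑ i, πstar i * g i
        = ∑ i : Fin n, (if n - k ≤ (i:ℕ) then (1/(θ*n)) * g i
            else if i = m then (1 - (k:ℝ)/(θ*n)) * g i else 0) := by
      refine Finset.sum_congr rfl fun i _ => ?_
      rw [hval]
      by_cases h1 : n - k ≤ (i:ℕ)
      · rw [if_pos h1, if_pos h1]
      · rw [if_neg h1, if_neg h1]
        by_cases h2 : (i:ℕ) + 1 = n - k
        · have hi : i = m := Fin.ext (by rw [hmv]; omega)
          rw [if_pos h2, if_pos hi]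
        · have hi : i ≠ m := by
            intro h; apply h2; rw [h, hmv]; omega
          rw [if_neg h2, if_neg hi, zero_mul]
    rw [step1, Finset.sum_ite]
    congr 1
    · rw [Finset.mul_sum]
    · rw [Finset.sum_ite_eq']
      rw [if_pos]
      simp only [Finset.mem_filter, Finset.mem_univ, true_and, hmv]
      omega
  have hcard : (Finset.univ.filter (fun i : Fin n => n - k ≤ (i:ℕ))).card = k := by
    rw [Finset.card_filter]
    rw [Fin.sum_univ_eq_sum_range (fun i => if n - k ≤ i then (1:ℕ) else 0)]
    rw [Finset.range_eq_Ico,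
      ← Finset.sum_Ico_consecutive _ (Nat.zero_le (n-k)) (by omega : n - k ≤ n)]
    have h0 : ∑ i ∈ Finset.Ico 0 (n-k), (if n - k ≤ i then (1:ℕ) else 0) = 0 :=
      Finset.sum_eq_zero fun i hi => by
        rw [Finset.mem_Ico] at hi; rw [if_neg (by omega)]
    have h1 : ∑ i ∈ Finset.Ico (n-k) n, (if n - k ≤ i then (1:ℕ) else 0) = k := by
      have hc : ∀ i ∈ Finset.Ico (n-k) n, (if n - k ≤ i then (1:ℕ) else 0) = 1 := by
        intro i hi; rw [Finset.mem_Ico] at hi; rw [if_pos hi.1]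
      rw [Finset.sum_congr rfl hc, Finset.sum_const, Nat.card_Ico, smul_eq_mul, mul_one]
      omega
    rw [h0, h1]
    omega
  have hsum1 : ∑ i, πstar i = 1 := by
    have h := hsum (fun _ => (1:ℝ))
    simp only [mul_one] at h
    rw [show (∑ i, πstar i) = ∑ i, πstar i * 1 by simp, hsum]
    rw [Finset.sum_const, hcard, nsmul_eq_mul, mul_one, mul_one]
    field_simp
    ring
  -- key nonnegativity
  have hkey : ∀ π : Fin n → ℝ, (∀ i, 0 ≤ π i) → (∀ i, π i ≤ 1/(θ*n)) →
      ∀ i : Fin n, 0 ≤ (πstar i - π i) * (a i - a m) := by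
    intro π h0 hub i
    rcases lt_trichotomy i m with h | h | h
    · rw [hval_lt i h]
      have ham : a i ≤ a m := (ha h).le
      nlinarith [h0 i, mul_nonneg (h0 i) (sub_nonneg.mpr ham)]
    · rw [h]; simp
    · rw [hval_gt i h]
      have ham : a m ≤ a i := (ha h).le
      exact mul_nonneg (sub_nonneg.mpr (hub i)) (sub_nonneg.mpr ham)
  have hdiff : ∀ π : Fin n → ℝ, (∑ i, π i = 1) →
      ∑ i, (πstar i - π i) * (a i - a m)
        = ∑ i, πstar i * a i - ∑ i, π i * a i := by
    intro π hs
    rw [Finset.sum_congr rfl (fun i _ => show (πstar i - π i) * (a i - a m)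
      = πstar i * a i - π i * a i - (πstar i * a m - π i * a m) by ring)]
    rw [Finset.sum_sub_distrib, Finset.sum_sub_distrib, Finset.sum_sub_distrib,
      ← Finset.sum_mul, ← Finset.sum_mul, hs, hsum1]
    ring
  refine ⟨⟨?_, hsum1, ?_⟩, ?_, ?_, ?_⟩
  · -- nonneg
    intro i
    rw [hval]
    split_ifs
    · positivity
    · have : (k:ℝ)/(θ*n) ≤ 1 := (div_le_one hθn).mpr hkle
      linarith
    · exact le_refl 0
  · -- upper bound
    intro i
    rw [hval]
    split_ifs
    · exact le_refl _
    · rw [sub_le_iff_le_add, ← add_div, le_div_iff₀ hθn]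
      linarith
    · positivity
  · -- optimality
    intro π h0 hs hub
    have hnn := Finset.sum_nonneg (fun i (_ : i ∈ Finset.univ) => hkey π h0 hub i)
    rw [hdiff π hs] at hnn
    linarith
  · -- uniqueness
    intro π h0 hs hub heq
    have hz : ∑ i, (πstar i - π i) * (a i - a m) = 0 := by
      rw [hdiff π hs, heq]; ring
    have hall := (Finset.sum_eq_zero_iff_of_nonneg
      (fun i (_ : i ∈ Finset.univ) => hkey π h0 hub i)).mp hz
    have hoff : ∀ i : Fin n, i ≠ m → π i = πstar i := by
      intro i hne
      have h := hall i (Finset.mem_univ i)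
      have hane : a i - a m ≠ 0 := by
        rcases hne.lt_or_gt with h' | h'
        · exact ne_of_lt (sub_neg.mpr (ha h'))
        · exact ne_of_gt (sub_pos.mpr (ha h'))
      have := (mul_eq_zero.mp h).resolve_right hane
      linarith
    have hmeq : π m = πstar m := by
      have e1 : π m + ∑ i ∈ Finset.univ.erase m, π i = 1 := by
        rw [Finset.add_sum_erase _ π (Finset.mem_univ m), hs]
      have e2 : πstar m + ∑ i ∈ Finset.univ.erase m, πstar i = 1 := by
        rw [Finset.add_sum_erase _ πstar (Finset.mem_univ m), hsum1]
      have e3 : ∑ i ∈ Finset.univ.erase m, π i = ∑ i ∈ Finset.univ.erase m, πstar i :=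
        Finset.sum_congr rfl fun i hi => hoff i (Finset.ne_of_mem_erase hi)
      linarith
    funext i
    by_cases h : i = m
    · rw [h]; exact hmeq
    · exact hoff i h
  · -- value
    exact hsum a
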